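/- Define Θ_ℓ = (θ_{ℓ−1} − 1)/θ_ℓ for ℓ ≥ 2. Then for every j ≥ 3 and every K ≥ j, the partial sum of products satisfies Σ_{k=j}^{K} ∏_{ℓ=j}^{k} Θ_ℓ ≤ γ·θ_{j−1} − 1. -/

import Mathlib

open Finset

/-- Lemma 4: With `Θ_ℓ = (θ_{ℓ−1} − 1)/θ_ℓ`, for every `j ≥ 3` and
`K ≥ j`, `Σ_{k=j}^{K} Π_{ℓ=j}^{k} Θ_ℓ ≤ γ θ_{j−1} − 1`. -/
theorem momentum_product_sum_bound (γ b : ℝ) (hγ : 2 ≤ γ) (hb0 : 0 ≤ b) (hb1 : b ≤ 1 / 4)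
    (β θ : ℕ → ℝ) (hβ : ∀ i, 1 ≤ i → 0 < β i)
    (hθ1 : θ 1 = 1)
    (hθ : ∀ i, 2 ≤ i → θ i = 1 / γ + Real.sqrt (b + (β (i - 1) / β i) * (θ (i - 1)) ^ 2))
    (hθge1 : ∀ i, 1 ≤ i → 1 ≤ θ i)
    (Θ : ℕ → ℝ) (hΘ : ∀ l, 2 ≤ l → Θ l = (θ (l - 1) - 1) / θ l) :
    ∀ j K : ℕ, 3 ≤ j → j ≤ K →
      ∑ k ∈ Finset.Icc j K, ∏ l ∈ Finset.Icc j k, Θ l ≤ γ * θ (j - 1) - 1 := by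
  have key : ∀ n : ℕ, ∀ j : ℕ, 2 ≤ j →
      ∑ k ∈ Finset.Icc j (j + n), ∏ l ∈ Finset.Icc j k, Θ l ≤ γ * θ (j - 1) - 1 := by
    intro n
    induction n with
    | zero =>
      intro j hj
      have hθj : 1 ≤ θ j := hθge1 j (by omega)
      have hθj1 : 1 ≤ θ (j - 1) := hθge1 (j - 1) (by omega)
      simp only [Nat.add_zero, Finset.Icc_self, Finset.sum_singleton, Finset.prod_singleton]
      rw [hΘ j hj]
      have h1 : (θ (j - 1) - 1) / θ j ≤ θ (j - 1) - 1 :=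
        div_le_self (by linarith) hθj
      nlinarith
    | succ n ih =>
      intro j hj
      have hθj : 1 ≤ θ j := hθge1 j (by omega)
      have hθj1 : 1 ≤ θ (j - 1) := hθge1 (j - 1) (by omega)
      have hΘj : Θ j = (θ (j - 1) - 1) / θ j := hΘ j hj
      have hΘj0 : 0 ≤ Θ j := by
        rw [hΘj]; exact div_nonneg (by linarith) (by linarith)
      have hsplit : ∑ k ∈ Finset.Icc j (j + (n + 1)), ∏ l ∈ Finset.Icc j k, Θ l
          = Θ j * (1 + ∑ k ∈ Finset.Icc (j + 1) (j + 1 + n), ∏ l ∈ Finset.Icc (j + 1) k, Θ l) := by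
        rw [← Finset.Ico_add_one_right_eq_Icc, Finset.sum_eq_sum_Ico_succ_bot (by omega)]
        have hfirst : ∏ l ∈ Finset.Icc j j, Θ l = Θ j := by
          simp
        have hrest : ∑ k ∈ Finset.Ico (j + 1) (j + (n + 1) + 1), ∏ l ∈ Finset.Icc j k, Θ l
            = ∑ k ∈ Finset.Ico (j + 1) (j + (n + 1) + 1),
                Θ j * ∏ l ∈ Finset.Icc (j + 1) k, Θ l := by
          apply Finset.sum_congr rfl
          intro k hk
          rw [Finset.mem_Ico] at hk
          rw [← Finset.Ico_add_one_right_eq_Icc, Finset.prod_eq_prod_Ico_succ_bot (by omega),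
            Finset.Ico_add_one_right_eq_Icc]
        rw [hfirst, hrest, ← Finset.mul_sum]
        rw [Finset.Ico_add_one_right_eq_Icc]
        have : j + (n + 1) = j + 1 + n := by omega
        rw [this]
        ring
      rw [hsplit]
      have hih := ih (j + 1) (by omega)
      simp only [Nat.add_sub_cancel] at hih
      have h1 : 1 + ∑ k ∈ Finset.Icc (j + 1) (j + 1 + n), ∏ l ∈ Finset.Icc (j + 1) k, Θ l
          ≤ γ * θ j := by linarith
      have h2 : Θ j * (1 + ∑ k ∈ Finset.Icc (j + 1) (j + 1 + n), ∏ l ∈ Finset.Icc (j + 1) k, Θ l)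
          ≤ Θ j * (γ * θ j) := mul_le_mul_of_nonneg_left h1 hΘj0
      have h3 : Θ j * (γ * θ j) = γ * (θ (j - 1) - 1) := by
        rw [hΘj]
        field_simp
      linarith
  intro j K hj hjK
  obtain ⟨n, rfl⟩ : ∃ n, K = j + n := ⟨K - j, by omega⟩
  exact key n j (by omega)
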